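/- Let S(2) = ⟨S, →⟩ be the dense local order with partition {A, B} and associated linear order ρ. If D ⊆ S is such that ⟨D, → ↾ D⟩ is an elementary substructure of S(2), then ⟨D, ρ ↾ D⟩ is a dense linear order, and A ∩ D and B ∩ D are dense subsets of it. -/

import Mathlib

/-- Points of the unit circle with rational angle. -/
def Scirc : Set ℂ := {z | ∃ q : ℚ, z = Complex.exp (q * Complex.I)}

/-- The dense local order relation: `e^{q₁i} → e^{q₂i}` iff
`q₂ - q₁ ∈ ⋃_{k∈ℤ} (2kπ, 2kπ + π)`. -/
def Arrow2 (x y : ℂ) : Prop :=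
  ∃ q₁ q₂ : ℚ, x = Complex.exp (q₁ * Complex.I) ∧ y = Complex.exp (q₂ * Complex.I) ∧
    ∃ k : ℤ, 2 * (k : ℝ) * Real.pi < (q₂ : ℝ) - (q₁ : ℝ) ∧
      (q₂ : ℝ) - (q₁ : ℝ) < 2 * (k : ℝ) * Real.pi + Real.pi

/-- The left half-circle: points with angle in `⋃_k (π/2 + 2kπ, 3π/2 + 2kπ)`. -/
def PartA : Set ℂ :=
  {z | ∃ q : ℚ, z = Complex.exp (q * Complex.I) ∧
    ∃ k : ℤ, Real.pi / 2 + 2 * (k : ℝ) * Real.pi < (q : ℝ) ∧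
      (q : ℝ) < 3 * Real.pi / 2 + 2 * (k : ℝ) * Real.pi}

/-- The right half-circle. -/
def PartB : Set ℂ := Scirc \ PartA

/-- The linear order `ρ`: agrees with `→` inside each part and with `→⁻¹`
across the two parts. -/
def Rho (x y : ℂ) : Prop :=
  (((x ∈ PartA ∧ y ∈ PartA) ∨ (x ∈ PartB ∧ y ∈ PartB)) ∧ Arrow2 x y) ∨
  (((x ∈ PartA ∧ y ∈ PartB) ∨ (x ∈ PartB ∧ y ∈ PartA)) ∧ Arrow2 y x)

attribute [local instance] Classical.propDecidable

/-- Satisfaction of a quantifier-free formula in the three variables `u, v, w`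
of the language `{R}`: such a formula is (equivalent to) a Boolean combination
of the nine atoms `R(t_i, t_j)`, i.e. it is coded by a Boolean function `θ`. -/
noncomputable def QFSat (θ : (Fin 3 → Fin 3 → Bool) → Bool) (x y z : ℂ) : Prop :=
  θ (fun i j => decide (Arrow2 (![x, y, z] i) (![x, y, z] j))) = true

/-- The Tarski–Vaught consequence of `⟨D, →↾D⟩ ≺ S(2)`: for every
quantifier-free formula `θ(u,v,w)` of the language `{R}` and all `x, y ∈ D`,
if some `s ∈ S` satisfies `θ(x,y,s)` then some `z ∈ D` does. -/
def TarskiVaught2 (D : Set ℂ) : Prop :=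
  ∀ (θ : (Fin 3 → Fin 3 → Bool) → Bool), ∀ x ∈ D, ∀ y ∈ D,
    (∃ s ∈ Scirc, QFSat θ x y s) → ∃ z ∈ D, QFSat θ x y z

open Real

noncomputable def rr (q : ℚ) : ℤ := round ((q : ℝ) / π)
noncomputable def tt (q : ℚ) : ℝ := (q : ℝ) / π - rr q

lemma div_pi_rat {q c : ℚ} (h : (q : ℝ) / π = (c : ℝ)) : q = 0 ∧ c = 0 := by
  have hc : c = 0 := by
    by_contra hc
    have hc' : (c : ℝ) ≠ 0 := by exact_mod_cast hc
    have : π = ((q / c : ℚ) : ℝ) := by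
      push_cast
      field_simp at h ⊢
      linarith [h]
    exact irrational_pi.ne_rat (q / c) this
  subst hc
  simp at h
  exact ⟨by exact_mod_cast h, rfl⟩

lemma div_pi_int {q : ℚ} {n : ℤ} (h : (q : ℝ) / π = (n : ℝ)) : q = 0 ∧ n = 0 := by
  have := div_pi_rat (c := (n : ℚ)) (by push_cast; exact h)
  exact ⟨this.1, by exact_mod_cast this.2⟩

lemma tt_lt : ∀ q : ℚ, -(1/2) < tt q ∧ tt q < 1/2 := by
  intro q
  have h := abs_sub_round ((q : ℝ) / π)
  rw [abs_le] at h
  have h1 : tt q ≠ 1/2 := by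
    intro he
    have : (q : ℝ) / π = ((rr q : ℚ) + 1/2 : ℚ) := by
      push_cast
      simp only [tt, rr] at he ⊢
      linarith
    have := (div_pi_rat this).2
    have h2 : ((rr q : ℚ) : ℚ) + 1/2 ≠ 0 := by
      intro h3
      have : (2 : ℚ) * ((rr q : ℚ) + 1/2) = 0 := by rw [h3]; ring
      have : (2 * rr q + 1 : ℤ) = 0 := by exact_mod_cast (by push_cast; linarith : ((2*rr q + 1 : ℤ) : ℚ) = 0)
      omega
    exact h2 this
  have h2 : tt q ≠ -(1/2) := by
    intro he
    have : (q : ℝ) / π = ((rr q : ℚ) - 1/2 : ℚ) := by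
      push_cast
      simp only [tt, rr] at he ⊢
      linarith
    have := (div_pi_rat this).2
    have h3 : ((rr q : ℚ) : ℚ) - 1/2 ≠ 0 := by
      intro h4
      have : (2 * rr q - 1 : ℤ) = 0 := by exact_mod_cast (by push_cast; linarith : ((2*rr q - 1 : ℤ) : ℚ) = 0)
      omega
    exact h3 this
  constructor
  · rcases lt_or_eq_of_le h.1 with h' | h'
    · simp only [tt, rr]; linarith
    · exact absurd h'.symm h2
  · rcases lt_or_eq_of_le h.2 with h' | h'
    · simp only [tt, rr]; linarith
    · exact absurd h' h1

lemma tt_inj {a b : ℚ} (h : tt a = tt b) : a = b := by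
  have : ((a - b : ℚ) : ℝ) / π = ((rr a - rr b : ℤ) : ℝ) := by
    simp only [tt] at h
    push_cast
    rw [sub_div]
    linarith
  have := (div_pi_int this).1
  linarith [sub_eq_zero.mp (by exact_mod_cast this : a - b = 0)]

lemma exp_inj {a b : ℚ} (h : Complex.exp (a * Complex.I) = Complex.exp (b * Complex.I)) :
    a = b := by
  rw [Complex.exp_eq_exp_iff_exists_int] at h
  obtain ⟨n, hn⟩ := h
  have hI : ((a : ℂ)) = (b : ℂ) + n * (2 * π) := by
    have : ((a : ℂ)) * Complex.I = ((b : ℂ) + n * (2 * π)) * Complex.I := by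
      rw [hn]; ring
    exact mul_right_cancel₀ Complex.I_ne_zero this
  have hR : (a : ℝ) = (b : ℝ) + n * (2 * π) := by exact_mod_cast hI
  have : ((a - b : ℚ) : ℝ) / π = ((2 * n : ℤ) : ℝ) := by
    push_cast
    field_simp
    nlinarith [hR, pi_gt_three]
  have := (div_pi_int this).1
  linarith [sub_eq_zero.mp (by exact_mod_cast this : a - b = 0)]

lemma qdiv_eq (q : ℚ) : (q : ℝ) / π = tt q + rr q := by simp [tt]

lemma q_eq (q : ℚ) : (q : ℝ) = (tt q + rr q) * π := by
  rw [← qdiv_eq]; field_simp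

lemma arrow_iff (a b : ℚ) :
    Arrow2 (Complex.exp (a * Complex.I)) (Complex.exp (b * Complex.I)) ↔
      ((tt a < tt b ∧ Even (rr b - rr a)) ∨ (tt b < tt a ∧ ¬ Even (rr b - rr a))) := by
  have hpi := pi_pos
  have hua := tt_lt a; have hub := tt_lt b
  have heq : (b : ℝ) - (a : ℝ) = (tt b - tt a + (((rr b : ℤ) : ℝ) - ((rr a : ℤ) : ℝ))) * π := by
    rw [q_eq a, q_eq b]; ring
  constructor
  · rintro ⟨q₁, q₂, h1, h2, k, hk1, hk2⟩
    rw [exp_inj h1.symm] at hk1 hk2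
    rw [exp_inj h2.symm] at hk1 hk2
    rw [heq] at hk1 hk2
    set u := tt b - tt a with hu
    have d1' : 2 * (k : ℝ) < u + ((rr b - rr a : ℤ) : ℝ) := by
      push_cast at hk1 ⊢; nlinarith
    have d2' : u + ((rr b - rr a : ℤ) : ℝ) < 2 * k + 1 := by
      push_cast at hk2 ⊢; nlinarith
    set m := rr b - rr a with hm
    rcases lt_trichotomy u 0 with h | h | h
    · right
      refine ⟨by simp only [hu] at h; linarith, ?_⟩
      have h1' : 2*k < m := by exact_mod_cast (by linarith : (2*(k:ℝ)) < (m:ℝ))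
      have h2' : m < 2*k+2 := by exact_mod_cast (by linarith : ((m:ℝ)) < 2*(k:ℝ)+2)
      intro ⟨j, hj⟩; omega
    · exfalso
      have h1' : 2*k < m := by exact_mod_cast (by linarith : (2*(k:ℝ)) < (m:ℝ))
      have h2' : m < 2*k+1 := by exact_mod_cast (by linarith : ((m:ℝ)) < 2*(k:ℝ)+1)
      omega
    · left
      refine ⟨by simp only [hu] at h; linarith, ?_⟩
      have h1' : 2*k-1 < m := by exact_mod_cast (by linarith : (2*(k:ℝ)-1) < (m:ℝ))
      have h2' : m < 2*k+1 := by exact_mod_cast (by linarith : ((m:ℝ)) < 2*(k:ℝ)+1)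
      have : m = 2*k := by omega
      exact ⟨k, by omega⟩
  · intro h
    refine ⟨a, b, rfl, rfl, ?_⟩
    rcases h with ⟨hlt, ⟨j, hj⟩⟩ | ⟨hlt, hodd⟩
    · refine ⟨j, ?_, ?_⟩ <;>
      · rw [heq]
        have hm : ((rr b : ℤ) : ℝ) - ((rr a : ℤ) : ℝ) = (j : ℝ) + (j : ℝ) := by
          have h' : rr b - rr a = j + j := by omega
          have h'' : ((rr b - rr a : ℤ) : ℝ) = ((j + j : ℤ) : ℝ) := by rw [h']
          push_cast at h''; linarith
        rw [hm]; nlinarith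
    · rw [Int.not_even_iff_odd] at hodd
      obtain ⟨j, hj⟩ := hodd
      refine ⟨j, ?_, ?_⟩ <;>
      · rw [heq]
        have hm : ((rr b : ℤ) : ℝ) - ((rr a : ℤ) : ℝ) = 2*(j : ℝ) + 1 := by
          have h' : rr b - rr a = 2*j + 1 := by omega
          have h'' : ((rr b - rr a : ℤ) : ℝ) = ((2*j + 1 : ℤ) : ℝ) := by rw [h']
          push_cast at h''; linarith
        rw [hm]; nlinarith

lemma mem_scirc (q : ℚ) : Complex.exp (q * Complex.I) ∈ Scirc := ⟨q, rfl⟩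

lemma partA_iff (q : ℚ) : Complex.exp (q * Complex.I) ∈ PartA ↔ ¬ Even (rr q) := by
  have hpi := pi_pos
  have hu := tt_lt q
  constructor
  · rintro ⟨q', hq', k, hk1, hk2⟩
    rw [exp_inj hq'.symm] at hk1 hk2
    rw [q_eq q] at hk1 hk2
    have d1 : (2*k : ℤ) < rr q := by
      exact_mod_cast (by nlinarith : (2*(k:ℝ)) < ((rr q : ℤ) : ℝ))
    have d2 : (rr q : ℤ) < 2*k + 2 := by
      exact_mod_cast (by nlinarith : ((rr q : ℤ) : ℝ) < 2*(k:ℝ) + 2)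
    intro ⟨j, hj⟩; omega
  · intro hodd
    rw [Int.not_even_iff_odd] at hodd
    obtain ⟨j, hj⟩ := hodd
    refine ⟨q, rfl, j, ?_, ?_⟩ <;>
    · rw [q_eq q]
      have h'' : ((rr q : ℤ) : ℝ) = ((2*j + 1 : ℤ) : ℝ) := by rw [hj]
      push_cast at h'' ⊢
      nlinarith

lemma partB_iff (q : ℚ) : Complex.exp (q * Complex.I) ∈ PartB ↔ Even (rr q) := by
  rw [PartB, Set.mem_diff, partA_iff]
  simp [mem_scirc]

lemma rho_iff (a b : ℚ) :
    Rho (Complex.exp (a * Complex.I)) (Complex.exp (b * Complex.I)) ↔ tt a < tt b := by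
  rw [Rho, arrow_iff, arrow_iff, partA_iff, partA_iff, partB_iff, partB_iff]
  have hab : Even (rr b - rr a) ↔ (Even (rr a) ↔ Even (rr b)) := by
    rw [Int.even_sub]; tauto
  have hba : Even (rr a - rr b) ↔ (Even (rr a) ↔ Even (rr b)) := by
    rw [Int.even_sub]
  rw [hab, hba]
  have hpq : ¬(tt a < tt b ∧ tt b < tt a) := fun h => absurd (h.1.trans h.2) (lt_irrefl _)
  tauto

lemma exists_witness (a b : ℚ) (n : ℤ) (hab : tt a < tt b) :
    ∃ c : ℚ, rr c = n ∧ tt a < tt c ∧ tt c < tt b := by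
  have hpi := pi_pos
  have h0 : π * ((n : ℝ) + tt a) < π * ((n : ℝ) + tt b) := by nlinarith
  obtain ⟨c, hc1, hc2⟩ := exists_rat_btwn h0
  have hca : (n : ℝ) + tt a < (c : ℝ)/π := by rw [lt_div_iff₀ hpi]; nlinarith
  have hcb : (c : ℝ)/π < (n : ℝ) + tt b := by rw [div_lt_iff₀ hpi]; nlinarith
  have hta := tt_lt a; have htb := tt_lt b
  have hrc : rr c = n := by
    rw [rr, round_eq]
    apply Int.floor_eq_iff.mpr
    constructor <;> push_cast <;> linarith
  refine ⟨c, hrc, ?_, ?_⟩ <;> simp only [tt, hrc] at hca hcb ⊢ <;> linarith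

lemma finish_aux {ta tb tc : ℝ} {P : Prop} (hab : ta < tb)
    (HA1 : (ta < tc ∧ P) ∨ (tc < ta ∧ ¬ P))
    (HA2 : (tc < tb ∧ P) ∨ (tb < tc ∧ ¬ P)) :
    ta < tc ∧ tc < tb ∧ P := by
  rcases HA1 with ⟨h, hp⟩ | ⟨h, hp⟩ <;> rcases HA2 with ⟨h', hp'⟩ | ⟨h', hp'⟩
  · exact ⟨h, h', hp⟩
  · exact absurd hp hp'
  · exact absurd hp' hp
  · exact absurd hab (by linarith)

lemma qfsat_pair (i1 j1 i2 j2 : Fin 3) (x y z : ℂ) :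
    QFSat (fun f => f i1 j1 && f i2 j2) x y z ↔
      Arrow2 (![x, y, z] i1) (![x, y, z] j1) ∧ Arrow2 (![x, y, z] i2) (![x, y, z] j2) := by
  simp [QFSat]

set_option maxHeartbeats 1000000 in
lemma dense_core (D : Set ℂ) (hDS : D ⊆ Scirc) (hTV : TarskiVaught2 D)
    (a b : ℚ) (n : ℤ) (hx : Complex.exp ((a : ℂ) * Complex.I) ∈ D)
    (hy : Complex.exp ((b : ℂ) * Complex.I) ∈ D) (hab : tt a < tt b) :
    ∃ c : ℚ, Complex.exp ((c : ℂ) * Complex.I) ∈ D ∧ tt a < tt c ∧ tt c < tt b ∧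
      (Even (rr c) ↔ Even n) := by
  obtain ⟨s, hrs, hsa, hsb⟩ := exists_witness a b n hab
  by_cases h1 : Even (n - rr a) <;> by_cases h2 : Even (rr b - n)
  · -- θ = R(u,w) ∧ R(w,v)
    have hw : QFSat (fun f => f 0 2 && f 2 1) (Complex.exp ((a : ℂ) * Complex.I))
        (Complex.exp ((b : ℂ) * Complex.I)) (Complex.exp ((s : ℂ) * Complex.I)) := by
      rw [qfsat_pair]
      simp only [Matrix.cons_val_zero, Matrix.cons_val_one, Matrix.head_cons,
        Matrix.cons_val_two, Matrix.tail_cons]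
      exact ⟨(arrow_iff a s).mpr (Or.inl ⟨hsa, by rw [hrs]; exact h1⟩),
        (arrow_iff s b).mpr (Or.inl ⟨hsb, by rw [hrs]; exact h2⟩)⟩
    obtain ⟨z, hzD, hz⟩ := hTV _ _ hx _ hy ⟨_, mem_scirc s, hw⟩
    obtain ⟨c, rfl⟩ := hDS hzD
    rw [qfsat_pair] at hz
    simp only [Matrix.cons_val_zero, Matrix.cons_val_one, Matrix.head_cons,
      Matrix.cons_val_two, Matrix.tail_cons] at hz
    rw [arrow_iff, arrow_iff] at hz
    obtain ⟨hA1, hA2⟩ := hz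
    refine ⟨c, hzD, finish_aux (P := Even (rr c) ↔ Even n) hab ?_ ?_⟩
    · simp only [Int.even_sub] at hA1 h1; tauto
    · simp only [Int.even_sub] at hA2 h2; tauto
  · -- θ = R(u,w) ∧ R(v,w)
    have hw : QFSat (fun f => f 0 2 && f 1 2) (Complex.exp ((a : ℂ) * Complex.I))
        (Complex.exp ((b : ℂ) * Complex.I)) (Complex.exp ((s : ℂ) * Complex.I)) := by
      rw [qfsat_pair]
      simp only [Matrix.cons_val_zero, Matrix.cons_val_one, Matrix.head_cons,
        Matrix.cons_val_two, Matrix.tail_cons]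
      refine ⟨(arrow_iff a s).mpr (Or.inl ⟨hsa, by rw [hrs]; exact h1⟩),
        (arrow_iff b s).mpr (Or.inr ⟨hsb, ?_⟩)⟩
      rw [hrs]
      simp only [Int.even_sub] at h2 ⊢; tauto
    obtain ⟨z, hzD, hz⟩ := hTV _ _ hx _ hy ⟨_, mem_scirc s, hw⟩
    obtain ⟨c, rfl⟩ := hDS hzD
    rw [qfsat_pair] at hz
    simp only [Matrix.cons_val_zero, Matrix.cons_val_one, Matrix.head_cons,
      Matrix.cons_val_two, Matrix.tail_cons] at hz
    rw [arrow_iff, arrow_iff] at hz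
    obtain ⟨hA1, hA2⟩ := hz
    refine ⟨c, hzD, finish_aux (P := Even (rr c) ↔ Even n) hab ?_ ?_⟩
    · simp only [Int.even_sub] at hA1 h1; tauto
    · simp only [Int.even_sub] at hA2 h2; tauto
  · -- θ = R(w,u) ∧ R(w,v)
    have hw : QFSat (fun f => f 2 0 && f 2 1) (Complex.exp ((a : ℂ) * Complex.I))
        (Complex.exp ((b : ℂ) * Complex.I)) (Complex.exp ((s : ℂ) * Complex.I)) := by
      rw [qfsat_pair]
      simp only [Matrix.cons_val_zero, Matrix.cons_val_one, Matrix.head_cons,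
        Matrix.cons_val_two, Matrix.tail_cons]
      refine ⟨(arrow_iff s a).mpr (Or.inr ⟨hsa, ?_⟩),
        (arrow_iff s b).mpr (Or.inl ⟨hsb, by rw [hrs]; exact h2⟩)⟩
      rw [hrs]
      simp only [Int.even_sub] at h1 ⊢; tauto
    obtain ⟨z, hzD, hz⟩ := hTV _ _ hx _ hy ⟨_, mem_scirc s, hw⟩
    obtain ⟨c, rfl⟩ := hDS hzD
    rw [qfsat_pair] at hz
    simp only [Matrix.cons_val_zero, Matrix.cons_val_one, Matrix.head_cons,
      Matrix.cons_val_two, Matrix.tail_cons] at hz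
    rw [arrow_iff, arrow_iff] at hz
    obtain ⟨hA1, hA2⟩ := hz
    refine ⟨c, hzD, finish_aux (P := Even (rr c) ↔ Even n) hab ?_ ?_⟩
    · simp only [Int.even_sub] at hA1 h1; tauto
    · simp only [Int.even_sub] at hA2 h2; tauto
  · -- θ = R(w,u) ∧ R(v,w)
    have hw : QFSat (fun f => f 2 0 && f 1 2) (Complex.exp ((a : ℂ) * Complex.I))
        (Complex.exp ((b : ℂ) * Complex.I)) (Complex.exp ((s : ℂ) * Complex.I)) := by
      rw [qfsat_pair]
      simp only [Matrix.cons_val_zero, Matrix.cons_val_one, Matrix.head_cons,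
        Matrix.cons_val_two, Matrix.tail_cons]
      refine ⟨(arrow_iff s a).mpr (Or.inr ⟨hsa, ?_⟩),
        (arrow_iff b s).mpr (Or.inr ⟨hsb, ?_⟩)⟩ <;> rw [hrs]
      · simp only [Int.even_sub] at h1 ⊢; tauto
      · simp only [Int.even_sub] at h2 ⊢; tauto
    obtain ⟨z, hzD, hz⟩ := hTV _ _ hx _ hy ⟨_, mem_scirc s, hw⟩
    obtain ⟨c, rfl⟩ := hDS hzD
    rw [qfsat_pair] at hz
    simp only [Matrix.cons_val_zero, Matrix.cons_val_one, Matrix.head_cons,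
      Matrix.cons_val_two, Matrix.tail_cons] at hz
    rw [arrow_iff, arrow_iff] at hz
    obtain ⟨hA1, hA2⟩ := hz
    refine ⟨c, hzD, finish_aux (P := Even (rr c) ↔ Even n) hab ?_ ?_⟩
    · simp only [Int.even_sub] at hA1 h1; tauto
    · simp only [Int.even_sub] at hA2 h2; tauto

/-- If `D ⊆ S` is (the domain of) an elementary substructure of
`S(2)`, then `⟨D, ρ↾D⟩` is a dense linear order and `A ∩ D`, `B ∩ D` are dense
subsets of it. -/
theorem elementary_substructure_rho_dense
    (D : Set ℂ) (hDS : D ⊆ Scirc) (hTV : TarskiVaught2 D) :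
    (∀ x ∈ D, ¬ Rho x x) ∧
    (∀ x ∈ D, ∀ y ∈ D, ∀ z ∈ D, Rho x y → Rho y z → Rho x z) ∧
    (∀ x ∈ D, ∀ y ∈ D, x ≠ y → Rho x y ∨ Rho y x) ∧
    (∀ x ∈ D, ∀ y ∈ D, Rho x y → ∃ z ∈ D, Rho x z ∧ Rho z y) ∧
    (∀ x ∈ D, ∀ y ∈ D, Rho x y → ∃ z ∈ PartA ∩ D, Rho x z ∧ Rho z y) ∧
    (∀ x ∈ D, ∀ y ∈ D, Rho x y → ∃ z ∈ PartB ∩ D, Rho x z ∧ Rho z y) := by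
  have hA : ∀ x ∈ D, ∀ y ∈ D, Rho x y → ∃ z ∈ PartA ∩ D, Rho x z ∧ Rho z y := by
    intro x hx y hy hxy
    obtain ⟨a, rfl⟩ := hDS hx
    obtain ⟨b, rfl⟩ := hDS hy
    rw [rho_iff] at hxy
    obtain ⟨c, hcD, hc1, hc2, hc3⟩ := dense_core D hDS hTV a b 1 hx hy hxy
    refine ⟨Complex.exp ((c : ℂ) * Complex.I), ⟨(partA_iff c).mpr ?_, hcD⟩,
      (rho_iff a c).mpr hc1, (rho_iff c b).mpr hc2⟩
    intro he
    exact (by decide : ¬ Even (1 : ℤ)) (hc3.mp he)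
  have hB : ∀ x ∈ D, ∀ y ∈ D, Rho x y → ∃ z ∈ PartB ∩ D, Rho x z ∧ Rho z y := by
    intro x hx y hy hxy
    obtain ⟨a, rfl⟩ := hDS hx
    obtain ⟨b, rfl⟩ := hDS hy
    rw [rho_iff] at hxy
    obtain ⟨c, hcD, hc1, hc2, hc3⟩ := dense_core D hDS hTV a b 0 hx hy hxy
    exact ⟨Complex.exp ((c : ℂ) * Complex.I), ⟨(partB_iff c).mpr (hc3.mpr Even.zero), hcD⟩,
      (rho_iff a c).mpr hc1, (rho_iff c b).mpr hc2⟩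
  refine ⟨?_, ?_, ?_, ?_, hA, hB⟩
  · intro x hx
    obtain ⟨a, rfl⟩ := hDS hx
    rw [rho_iff]
    exact lt_irrefl _
  · intro x hx y hy z hz hxy hyz
    obtain ⟨a, rfl⟩ := hDS hx
    obtain ⟨b, rfl⟩ := hDS hy
    obtain ⟨c, rfl⟩ := hDS hz
    rw [rho_iff] at *
    exact hxy.trans hyz
  · intro x hx y hy hne
    obtain ⟨a, rfl⟩ := hDS hx
    obtain ⟨b, rfl⟩ := hDS hy
    rw [rho_iff, rho_iff]
    rcases lt_trichotomy (tt a) (tt b) with h | h | h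
    · exact Or.inl h
    · exact absurd (by rw [tt_inj h]) hne
    · exact Or.inr h
  · intro x hx y hy hxy
    obtain ⟨z, ⟨_, hzD⟩, h1, h2⟩ := hA x hx y hy hxy
    exact ⟨z, hzD, h1, h2⟩
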